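/- (Green's theorem for a variable-length domain) Let s_p : [t0,tf] → R be C^1 with s_p(t) ≤ L, and let r, δr : {(s̄,t) : t ∈ [t0,tf], s̄ ∈ [s_p(t), L]} → R^3 be C^2 with δr(·, t0) = δr(·, tf) = 0. Then ∫_{t0}^{tf} ∫_{s_p(t)}^{L} ṙ(s̄,t) · δṙ(s̄,t) ds̄ dt = ∫_{t0}^{tf} [ ∫_{s_p(t)}^{L} -r̈(s̄,t) · δr(s̄,t) ds̄ + ṙ(s_p(t),t) · δr(s_p(t),t) ṡ_p(t) ] dt. -/

import Mathlib

open MeasureTheory intervalIntegral Set Asymptotics Metric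

section helpers

variable {E : Type*} [NormedAddCommGroup E] [NormedSpace ℝ E]

noncomputable def pd (g : ℝ × ℝ → E) : ℝ × ℝ → E := fun p => fderiv ℝ g p (0, 1)

lemma pd_hasDerivAt {g : ℝ × ℝ → E} (hg : Differentiable ℝ g) (s t : ℝ) :
    HasDerivAt (fun τ => g (s, τ)) (pd g (s, t)) t :=
  (hg (s, t)).hasFDerivAt.comp_hasDerivAt t ((hasDerivAt_const t s).prodMk (hasDerivAt_id t))

lemma pd_contDiff {n : ℕ∞} {g : ℝ × ℝ → E} (hg : ContDiff ℝ (n + 1) g) : ContDiff ℝ n (pd g) :=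
  (hg.fderiv_right le_rfl).clm_apply contDiff_const

lemma hasDerivAt_movingIntegral {f f' : ℝ × ℝ → ℝ} (hf : Continuous f) (hf' : Continuous f')
    (hd : ∀ s t, HasDerivAt (fun τ => f (s, τ)) (f' (s, t)) t)
    {sp : ℝ → ℝ} (hsp : ContDiff ℝ 1 sp) (L t₁ : ℝ) :
    HasDerivAt (fun t => ∫ sb in sp t..L, f (sb, t))
      ((∫ sb in sp t₁..L, f' (sb, t₁)) - f (sp t₁, t₁) * deriv sp t₁) t₁ := by
  have hspd : Differentiable ℝ sp := hsp.differentiable one_ne_zero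
  set c := sp t₁ with hc
  have hsec : ∀ t : ℝ, Continuous fun sb => f (sb, t) := fun t =>
    hf.comp (continuous_id.prodMk continuous_const)
  have hsec' : ∀ t : ℝ, Continuous fun sb => f' (sb, t) := fun t =>
    hf'.comp (continuous_id.prodMk continuous_const)
  have hint : ∀ (t a b : ℝ), IntervalIntegrable (fun sb => f (sb, t)) volume a b := fun t a b =>
    (hsec t).intervalIntegrable a b
  have hint' : ∀ (t a b : ℝ), IntervalIntegrable (fun sb => f' (sb, t)) volume a b := fun t a b =>
    (hsec' t).intervalIntegrable a b
  -- Part B : fixed lower endpoint c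
  have hB : HasDerivAt (fun t => ∫ sb in c..L, f (sb, t)) (∫ sb in c..L, f' (sb, t₁)) t₁ := by
    obtain ⟨M, hM⟩ := ((isCompact_uIcc (a := c) (b := L)).prod
      (isCompact_Icc (a := t₁ - 1) (b := t₁ + 1))).exists_bound_of_continuousOn hf'.continuousOn
    refine (intervalIntegral.hasDerivAt_integral_of_dominated_loc_of_deriv_le
      (F := fun t sb => f (sb, t)) (F' := fun t sb => f' (sb, t)) (bound := fun _ => M)
      (Metric.ball_mem_nhds t₁ one_pos) ?_ ?_ ?_ ?_ ?_ ?_).2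
    · exact Filter.Eventually.of_forall fun x => (hsec x).aestronglyMeasurable
    · exact hint t₁ c L
    · exact (hsec' t₁).aestronglyMeasurable
    · refine Filter.Eventually.of_forall fun sb hsb x hx => hM (sb, x) ?_
      refine ⟨uIoc_subset_uIcc hsb, ?_⟩
      have := mem_ball_iff_norm.1 hx
      rw [Real.norm_eq_abs, abs_lt] at this
      constructor <;> [linarith [this.1]; linarith [this.2]]
    · exact intervalIntegrable_const
    · exact Filter.Eventually.of_forall fun sb _ x _ => hd sb x
  -- Part A : moving endpoint
  have hΨu : HasDerivAt (fun u => ∫ sb in c..u, f (sb, t₁)) (f (c, t₁)) c :=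
    intervalIntegral.integral_hasDerivAt_right (hint t₁ c c)
      ((hsec t₁).stronglyMeasurable.stronglyMeasurableAtFilter)
      (hsec t₁).continuousAt
  have H1 : HasDerivAt (fun t => ∫ sb in c..sp t, f (sb, t₁)) (f (c, t₁) * deriv sp t₁) t₁ :=
    HasDerivAt.comp t₁ hΨu (hspd t₁).hasDerivAt
  have H2 : HasDerivAt
      (fun t => (∫ sb in c..sp t, f (sb, t)) - ∫ sb in c..sp t, f (sb, t₁)) 0 t₁ := by
    rw [hasDerivAt_iff_isLittleO]
    simp only [smul_zero, sub_zero, hc, intervalIntegral.integral_same, sub_self]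
    rw [isLittleO_iff]
    intro ε hε
    obtain ⟨C, hC0, hC⟩ := ((hspd t₁).hasDerivAt.isBigO_sub).exists_nonneg
    have hCb := hC.bound
    have hucont := ((isCompact_Icc (a := c - 1) (b := c + 1)).prod
      (isCompact_Icc (a := t₁ - 1) (b := t₁ + 1))).uniformContinuousOn_of_continuous
      hf.continuousOn
    have hε'pos : 0 < ε / (C + 1) := div_pos hε (by linarith)
    obtain ⟨δ, hδpos, hδ⟩ := Metric.uniformContinuousOn_iff.1 hucont (ε / (C + 1)) hε'pos
    have ev2 : ∀ᶠ t in nhds t₁, |sp t - c| ≤ 1 := by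
      have h1 : ∀ᶠ t in nhds t₁, sp t ∈ Metric.closedBall c 1 :=
        (hspd.continuous.tendsto t₁) (Metric.closedBall_mem_nhds c one_pos)
      filter_upwards [h1] with t ht
      simpa [Metric.mem_closedBall, Real.dist_eq] using ht
    have ev3 : ∀ᶠ t in nhds t₁, dist t t₁ < δ :=
      Filter.eventually_of_mem (Metric.ball_mem_nhds t₁ hδpos) fun t ht => mem_ball.1 ht
    have ev4 : ∀ᶠ t in nhds t₁, dist t t₁ ≤ 1 :=
      Filter.eventually_of_mem (Metric.closedBall_mem_nhds t₁ one_pos)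
        fun t ht => mem_closedBall.1 ht
    filter_upwards [hCb, ev2, ev3, ev4] with t h1 h2 h3 h4
    have hsub : (∫ sb in c..sp t, f (sb, t)) - ∫ sb in c..sp t, f (sb, t₁)
        = ∫ sb in c..sp t, (f (sb, t) - f (sb, t₁)) :=
      (intervalIntegral.integral_sub (hint t c (sp t)) (hint t₁ c (sp t))).symm
    rw [hsub]
    have hbound : ∀ sb ∈ Set.uIoc c (sp t), ‖f (sb, t) - f (sb, t₁)‖ ≤ ε / (C + 1) := by
      intro sb hsb
      have hsb' : sb ∈ Icc (c - 1) (c + 1) := by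
        have h2' := abs_le.1 h2
        have := uIoc_subset_uIcc hsb
        have hs2 : uIcc c (sp t) ⊆ Icc (c - 1) (c + 1) :=
          uIcc_subset_Icc ⟨by linarith, by linarith⟩ ⟨by linarith [h2'.1], by linarith [h2'.2]⟩
        exact hs2 this
      have h4' : |t - t₁| ≤ 1 := by rwa [Real.dist_eq] at h4
      have h4'' := abs_le.1 h4'
      have hm1 : (sb, t) ∈ Icc (c - 1) (c + 1) ×ˢ Icc (t₁ - 1) (t₁ + 1) :=
        ⟨hsb', by constructor <;> linarith [h4''.1, h4''.2]⟩
      have hm2 : (sb, t₁) ∈ Icc (c - 1) (c + 1) ×ˢ Icc (t₁ - 1) (t₁ + 1) :=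
        ⟨hsb', by constructor <;> linarith⟩
      have hdlt : dist ((sb, t) : ℝ × ℝ) (sb, t₁) < δ := by
        rw [Prod.dist_eq]
        simp only [dist_self]
        exact max_lt hδpos h3
      have := hδ (sb, t) hm1 (sb, t₁) hm2 hdlt
      rw [dist_eq_norm] at this
      exact this.le
    calc ‖∫ sb in c..sp t, (f (sb, t) - f (sb, t₁))‖
        ≤ ε / (C + 1) * |sp t - c| :=
          intervalIntegral.norm_integral_le_of_norm_le_const hbound
      _ ≤ ε / (C + 1) * (C * ‖t - t₁‖) := by
          apply mul_le_mul_of_nonneg_left _ hε'pos.le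
          simpa [Real.norm_eq_abs] using h1
      _ ≤ ε * ‖t - t₁‖ := by
          rw [← mul_assoc]
          apply mul_le_mul_of_nonneg_right _ (norm_nonneg _)
          rw [div_mul_eq_mul_div, div_le_iff₀ (by linarith : (0:ℝ) < C + 1)]
          nlinarith [hε.le]
  have H3 : HasDerivAt (fun t => ∫ sb in c..sp t, f (sb, t)) (f (c, t₁) * deriv sp t₁) t₁ := by
    have := H1.add H2
    rw [add_zero] at this
    have heq : (fun t => (∫ sb in c..sp t, f (sb, t₁))
        + ((∫ sb in c..sp t, f (sb, t)) - ∫ sb in c..sp t, f (sb, t₁)))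
        = fun t => ∫ sb in c..sp t, f (sb, t) := funext fun t => by ring
    rw [← heq]; exact this
  have htotal := (H3.neg).add hB
  have heq2 : (fun t => -(∫ sb in c..sp t, f (sb, t)) + ∫ sb in c..L, f (sb, t))
      = fun t => ∫ sb in sp t..L, f (sb, t) := by
    funext t
    rw [← intervalIntegral.integral_symm]
    exact intervalIntegral.integral_add_adjacent_intervals (hint t _ _) (hint t _ _)
  replace htotal : HasDerivAt (fun t => -(∫ sb in c..sp t, f (sb, t)) + ∫ sb in c..L, f (sb, t))
      _ t₁ := htotal
  rw [heq2] at htotal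
  convert htotal using 1
  ring

end helpers

section aux

variable {F : Type*} [NormedAddCommGroup F] [InnerProductSpace ℝ F]

lemma greens_aux (t0 tf L : ℝ) (sp : ℝ → ℝ) (Pt Qt Ptt DR : ℝ × ℝ → F)
    (hPt : Continuous Pt) (hQt : Continuous Qt) (hPtt : Continuous Ptt) (hDR : Continuous DR)
    (hsp : ContDiff ℝ 1 sp)
    (hd : ∀ s t, HasDerivAt (fun τ => (inner ℝ (Pt (s, τ)) (DR (s, τ)) : ℝ))
          ((inner ℝ (Pt (s, t)) (Qt (s, t)) : ℝ) + inner ℝ (Ptt (s, t)) (DR (s, t))) t)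
    (h0 : ∀ sb, DR (sb, t0) = 0) (hf : ∀ sb, DR (sb, tf) = 0) :
    (∫ t in t0..tf, ∫ sb in sp t..L, (inner ℝ (Pt (sb, t)) (Qt (sb, t)) : ℝ))
      = ∫ t in t0..tf, ((∫ sb in sp t..L, -(inner ℝ (Ptt (sb, t)) (DR (sb, t)) : ℝ))
          + (inner ℝ (Pt (sp t, t)) (DR (sp t, t)) : ℝ) * deriv sp t) := by
  set f : ℝ × ℝ → ℝ := fun p => (inner ℝ (Pt p) (DR p) : ℝ) with hfdef
  set f' : ℝ × ℝ → ℝ :=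
    fun p => (inner ℝ (Pt p) (Qt p) : ℝ) + (inner ℝ (Ptt p) (DR p) : ℝ) with hf'def
  have hfc : Continuous f := hPt.inner hDR
  have hf'c : Continuous f' := (hPt.inner hQt).add (hPtt.inner hDR)
  have hdf : ∀ s t, HasDerivAt (fun τ => f (s, τ)) (f' (s, t)) t := hd
  -- derivative of the moving-domain integral
  have hmov : ∀ t₁, HasDerivAt (fun t => ∫ sb in sp t..L, f (sb, t))
      ((∫ sb in sp t₁..L, f' (sb, t₁)) - f (sp t₁, t₁) * deriv sp t₁) t₁ := fun t₁ =>
    hasDerivAt_movingIntegral hfc hf'c hdf hsp L t₁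
  set g' : ℝ → ℝ :=
    fun t => (∫ sb in sp t..L, f' (sb, t)) - f (sp t, t) * deriv sp t with hg'def
  -- continuity facts
  have hparam : ∀ (h : ℝ × ℝ → ℝ), Continuous h →
      Continuous fun t => ∫ sb in sp t..L, h (sb, t) := by
    intro h hc
    have c1 : Continuous fun t => ∫ sb in L..sp t, h (sb, t) :=
      intervalIntegral.continuous_parametric_intervalIntegral_of_continuous
        (f := fun t sb => h (sb, t)) (hc.comp continuous_swap) hsp.continuous
    have e : (fun t => ∫ sb in sp t..L, h (sb, t))
        = fun t => -∫ sb in L..sp t, h (sb, t) :=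
      funext fun t => intervalIntegral.integral_symm L (sp t)
    rw [e]; exact c1.neg
  have hbndc : Continuous fun t => f (sp t, t) * deriv sp t :=
    (hfc.comp (hsp.continuous.prodMk continuous_id)).mul (hsp.continuous_deriv le_rfl)
  have hg'c : Continuous g' := (hparam f' hf'c).sub hbndc
  -- FTC: the integral of g' vanishes
  have hzero : (∫ t in t0..tf, g' t) = 0 := by
    have hFTC := intervalIntegral.integral_eq_sub_of_hasDerivAt
      (f := fun t => ∫ sb in sp t..L, f (sb, t)) (f' := g')
      (fun t _ => hmov t) (hg'c.intervalIntegrable t0 tf)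
    have e0 : (∫ sb in sp t0..L, f (sb, t0)) = 0 := by
      have : (fun sb => f (sb, t0)) = fun _ => (0 : ℝ) :=
        funext fun sb => by simp [hfdef, h0 sb]
      rw [this]; simp
    have ef : (∫ sb in sp tf..L, f (sb, tf)) = 0 := by
      have : (fun sb => f (sb, tf)) = fun _ => (0 : ℝ) :=
        funext fun sb => by simp [hfdef, hf sb]
      rw [this]; simp
    rw [hFTC]; simp only [e0, ef, sub_zero]
  -- pointwise splitting of the integrand
  have key : ∀ t, (∫ sb in sp t..L, (inner ℝ (Pt (sb, t)) (Qt (sb, t)) : ℝ))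
      = g' t + ((∫ sb in sp t..L, -(inner ℝ (Ptt (sb, t)) (DR (sb, t)) : ℝ))
          + (inner ℝ (Pt (sp t, t)) (DR (sp t, t)) : ℝ) * deriv sp t) := by
    intro t
    have i1 : IntervalIntegrable (fun sb => (inner ℝ (Pt (sb, t)) (Qt (sb, t)) : ℝ))
        volume (sp t) L :=
      (((hPt.comp (continuous_id.prodMk continuous_const)).inner
        (hQt.comp (continuous_id.prodMk continuous_const)))).intervalIntegrable _ _
    have i2 : IntervalIntegrable (fun sb => (inner ℝ (Ptt (sb, t)) (DR (sb, t)) : ℝ))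
        volume (sp t) L :=
      (((hPtt.comp (continuous_id.prodMk continuous_const)).inner
        (hDR.comp (continuous_id.prodMk continuous_const)))).intervalIntegrable _ _
    have hadd : (∫ sb in sp t..L, f' (sb, t))
        = (∫ sb in sp t..L, (inner ℝ (Pt (sb, t)) (Qt (sb, t)) : ℝ))
          + ∫ sb in sp t..L, (inner ℝ (Ptt (sb, t)) (DR (sb, t)) : ℝ) :=
      intervalIntegral.integral_add i1 i2
    have hneg : (∫ sb in sp t..L, -(inner ℝ (Ptt (sb, t)) (DR (sb, t)) : ℝ))
        = -∫ sb in sp t..L, (inner ℝ (Ptt (sb, t)) (DR (sb, t)) : ℝ) :=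
      intervalIntegral.integral_neg
    rw [hg'def]
    simp only [hadd, hneg, hfdef]
    ring
  have hrhsc : Continuous fun t =>
      (∫ sb in sp t..L, -(inner ℝ (Ptt (sb, t)) (DR (sb, t)) : ℝ))
        + (inner ℝ (Pt (sp t, t)) (DR (sp t, t)) : ℝ) * deriv sp t :=
    (hparam _ ((hPtt.inner hDR).neg)).add hbndc
  calc (∫ t in t0..tf, ∫ sb in sp t..L, (inner ℝ (Pt (sb, t)) (Qt (sb, t)) : ℝ))
      = ∫ t in t0..tf, (g' t + ((∫ sb in sp t..L, -(inner ℝ (Ptt (sb, t)) (DR (sb, t)) : ℝ))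
          + (inner ℝ (Pt (sp t, t)) (DR (sp t, t)) : ℝ) * deriv sp t)) :=
        intervalIntegral.integral_congr fun t _ => key t
    _ = (∫ t in t0..tf, g' t) + ∫ t in t0..tf,
          ((∫ sb in sp t..L, -(inner ℝ (Ptt (sb, t)) (DR (sb, t)) : ℝ))
          + (inner ℝ (Pt (sp t, t)) (DR (sp t, t)) : ℝ) * deriv sp t) :=
        intervalIntegral.integral_add (hg'c.intervalIntegrable t0 tf)
          (hrhsc.intervalIntegrable t0 tf)
    _ = _ := by rw [hzero, zero_add]

end aux

theorem greens_theorem_variable_domain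
    (t0 tf L : ℝ) (sp : ℝ → ℝ) (r dr : ℝ → ℝ → EuclideanSpace ℝ (Fin 3))
    (hsp : ContDiff ℝ 1 sp) (hspL : ∀ t, sp t ≤ L)
    (hr : ContDiff ℝ 2 (fun p : ℝ × ℝ => r p.1 p.2))
    (hdr : ContDiff ℝ 2 (fun p : ℝ × ℝ => dr p.1 p.2))
    (h0 : ∀ sb, dr sb t0 = 0) (hf : ∀ sb, dr sb tf = 0) :
    (∫ t in t0..tf, ∫ sb in sp t..L,
        (inner ℝ (deriv (fun τ => r sb τ) t) (deriv (fun τ => dr sb τ) t) : ℝ))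
      = ∫ t in t0..tf,
          ((∫ sb in sp t..L,
              -(inner ℝ (deriv (deriv (fun τ => r sb τ)) t) (dr sb t) : ℝ))
            + (inner ℝ (deriv (fun τ => r (sp t) τ) t) (dr (sp t) t) : ℝ) * deriv sp t) := by
  have hrd : Differentiable ℝ fun p : ℝ × ℝ => r p.1 p.2 := hr.differentiable two_ne_zero
  have hdrd : Differentiable ℝ fun p : ℝ × ℝ => dr p.1 p.2 := hdr.differentiable two_ne_zero
  have hPt : ContDiff ℝ 1 (pd fun p : ℝ × ℝ => r p.1 p.2) :=
    pd_contDiff (hr.of_le (by norm_num))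
  have hQt : ContDiff ℝ 1 (pd fun p : ℝ × ℝ => dr p.1 p.2) :=
    pd_contDiff (hdr.of_le (by norm_num))
  have hPtt : Continuous (pd (pd fun p : ℝ × ℝ => r p.1 p.2)) :=
    (pd_contDiff (n := 0) (hPt.of_le (by norm_num))).continuous
  have hd1 : ∀ (s t : ℝ), deriv (fun τ => r s τ) t
      = pd (fun p : ℝ × ℝ => r p.1 p.2) (s, t) := fun s t => (pd_hasDerivAt hrd s t).deriv
  have hd2 : ∀ (s t : ℝ), deriv (fun τ => dr s τ) t
      = pd (fun p : ℝ × ℝ => dr p.1 p.2) (s, t) := fun s t => (pd_hasDerivAt hdrd s t).deriv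
  have hd3 : ∀ (s t : ℝ), deriv (deriv (fun τ => r s τ)) t
      = pd (pd fun p : ℝ × ℝ => r p.1 p.2) (s, t) := by
    intro s t
    have e : deriv (fun τ => r s τ) = fun τ => pd (fun p : ℝ × ℝ => r p.1 p.2) (s, τ) :=
      funext fun τ => hd1 s τ
    rw [e]
    exact (pd_hasDerivAt (hPt.differentiable one_ne_zero) s t).deriv
  simp only [hd1, hd2, hd3]
  exact greens_aux t0 tf L sp
    (pd fun p : ℝ × ℝ => r p.1 p.2) (pd fun p : ℝ × ℝ => dr p.1 p.2)
    (pd (pd fun p : ℝ × ℝ => r p.1 p.2)) (fun p => dr p.1 p.2)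
    hPt.continuous hQt.continuous hPtt (hdr.continuous)
    hsp
    (fun s t => HasDerivAt.inner ℝ (pd_hasDerivAt (hPt.differentiable one_ne_zero) s t)
      (pd_hasDerivAt hdrd s t))
    h0 hf
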